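/- For any period n and cycle length a ≥ 1 with n + a − 1 ≤ T, suppose the set S = { y ∈ ℝ : Σ_{k=1}^{a} φ_{n,k}(y) ≥ a·p/(h+p) } is nonempty and bounded below, and let y_{n,a} = inf S. Then y_{n,a} is a global minimizer of the multi-period cost function: L_{n,a}(y_{n,a}) ≤ L_{n,a}(y) for every real y. -/

import Mathlib

open MeasureTheory ProbabilityTheory

/-- Accumulated demand `ξ_{n,k} = ξ_n + ⋯ + ξ_{n+k-1}`. -/
noncomputable def acc {Ω : Type*} (ξ : ℕ → Ω → ℝ) (n k : ℕ) (ω : Ω) : ℝ :=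
  ∑ i ∈ Finset.range k, ξ (n + i) ω

/-- Cumulative distribution function `φ_{n,k}(y) = P(ξ_{n,k} ≤ y)` of accumulated demand. -/
noncomputable def cdf {Ω : Type*} [MeasurableSpace Ω] (μ : Measure Ω) (ξ : ℕ → Ω → ℝ)
    (n k : ℕ) (y : ℝ) : ℝ :=
  (μ {ω | acc ξ n k ω ≤ y}).toReal

/-- Multi-period cost function
`L_{n,a}(y) = Σ_{k=1}^{a} (h·E[(y − ξ_{n,k})⁺] + p·E[(ξ_{n,k} − y)⁺])`. -/
noncomputable def Lmp {Ω : Type*} [MeasurableSpace Ω] (μ : Measure Ω) (h p : ℝ)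
    (ξ : ℕ → Ω → ℝ) (n a : ℕ) (y : ℝ) : ℝ :=
  ∑ k ∈ Finset.Icc 1 a,
    (h * ∫ ω, max (y - acc ξ n k ω) 0 ∂μ + p * ∫ ω, max (acc ξ n k ω - y) 0 ∂μ)

section newsvendorHelpers
open Set
variable {Ω : Type*} [MeasurableSpace Ω] {μ : Measure Ω} [IsProbabilityMeasure μ]


/-- volume computation 1 -/
lemma vol1 (x y z : ℝ) (hyz : y ≤ z) :
    (volume (Ioc y z ∩ Ici x)).toReal = max (z - x) 0 - max (y - x) 0 := by
  rcases le_or_gt x y with hxy | hxy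
  · have : Ioc y z ∩ Ici x = Ioc y z := by
      apply inter_eq_left.2
      intro t ht
      exact le_trans hxy (le_of_lt ht.1)
    rw [this, Real.volume_Ioc, ENNReal.toReal_ofReal (by linarith)]
    rw [max_eq_left (by linarith), max_eq_left (by linarith)]
    ring
  · rcases le_or_gt x z with hxz | hxz
    · have : Ioc y z ∩ Ici x = Icc x z := by
        ext t
        simp only [mem_inter_iff, mem_Ioc, mem_Ici, mem_Icc]
        constructor
        · rintro ⟨⟨_, h2⟩, h3⟩; exact ⟨h3, h2⟩
        · rintro ⟨h1, h2⟩; exact ⟨⟨lt_of_lt_of_le hxy h1, h2⟩, h1⟩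
      rw [this, Real.volume_Icc, ENNReal.toReal_ofReal (by linarith)]
      rw [max_eq_left (by linarith), max_eq_right (by linarith)]
      ring
    · have : Ioc y z ∩ Ici x = ∅ := by
        ext t
        simp only [mem_inter_iff, mem_Ioc, mem_Ici, mem_empty_iff_false, iff_false]
        rintro ⟨⟨_, h2⟩, h3⟩; linarith
      rw [this, measure_empty, ENNReal.toReal_zero]
      rw [max_eq_right (by linarith), max_eq_right (by linarith)]
      ring

/-- volume computation 2 -/
lemma vol2 (x y z : ℝ) (hyz : y ≤ z) :
    (volume (Ioc y z ∩ Iio x)).toReal = max (x - y) 0 - max (x - z) 0 := by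
  rcases le_or_gt x y with hxy | hxy
  · have : Ioc y z ∩ Iio x = ∅ := by
      ext t
      simp only [mem_inter_iff, mem_Ioc, mem_Iio, mem_empty_iff_false, iff_false]
      rintro ⟨⟨h1, _⟩, h3⟩; linarith
    rw [this, measure_empty, ENNReal.toReal_zero]
    rw [max_eq_right (by linarith), max_eq_right (by linarith)]
    ring
  · rcases le_or_gt x z with hxz | hxz
    · have : Ioc y z ∩ Iio x = Ioo y x := by
        ext t
        simp only [mem_inter_iff, mem_Ioc, mem_Iio, mem_Ioo]
        constructor
        · rintro ⟨⟨h1, _⟩, h3⟩; exact ⟨h1, h3⟩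
        · rintro ⟨h1, h2⟩; exact ⟨⟨h1, by linarith⟩, h2⟩
      rw [this, Real.volume_Ioo, ENNReal.toReal_ofReal (by linarith)]
      rw [max_eq_left (by linarith), max_eq_right (by linarith)]
      ring
    · have : Ioc y z ∩ Iio x = Ioc y z := by
        apply inter_eq_left.2
        intro t ht
        exact lt_of_le_of_lt ht.2 hxz
      rw [this, Real.volume_Ioc, ENNReal.toReal_ofReal (by linarith)]
      rw [max_eq_left (by linarith), max_eq_left (by linarith)]
      ring

lemma int_pos_part (X : Ω → ℝ) (hXi : Integrable X μ) (c : ℝ) :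
    Integrable (fun ω => max (c - X ω) 0) μ := by
  have := ((integrable_const c).sub hXi).pos_part
  simpa [max_def] using this

lemma int_pos_part' (X : Ω → ℝ) (hXi : Integrable X μ) (c : ℝ) :
    Integrable (fun ω => max (X ω - c) 0) μ := by
  have := (hXi.sub (integrable_const c)).pos_part
  simpa [max_def] using this

lemma key1 (X : Ω → ℝ) (hX : Measurable X) (hXi : Integrable X μ) {y z : ℝ} (hyz : y ≤ z) :
    (∫ ω, max (z - X ω) 0 ∂μ) - ∫ ω, max (y - X ω) 0 ∂μ =
      ∫ t in Ioc y z, (μ {ω | X ω ≤ t}).toReal := by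
  set ν : Measure ℝ := volume.restrict (Ioc y z) with hν
  have hνfin : IsFiniteMeasure ν := by
    constructor
    rw [hν, Measure.restrict_apply_univ, Real.volume_Ioc]
    exact ENNReal.ofReal_lt_top
  set f : Ω → ℝ → ℝ := fun ω t => ({q : Ω × ℝ | X q.1 ≤ q.2}.indicator 1 (ω, t)) with hf
  have hsetm : MeasurableSet {q : Ω × ℝ | X q.1 ≤ q.2} :=
    measurableSet_le (hX.comp measurable_fst) measurable_snd
  have hum : Measurable (Function.uncurry f) := by
    have : Function.uncurry f = {q : Ω × ℝ | X q.1 ≤ q.2}.indicator 1 := rfl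
    rw [this]
    exact (measurable_one.indicator hsetm)
  have hintf : Integrable (Function.uncurry f) (μ.prod ν) := by
    refine Integrable.mono' (integrable_const 1) hum.aestronglyMeasurable ?_
    filter_upwards with q
    simp only [Function.uncurry, f, Set.indicator_apply]
    split_ifs <;> norm_num
  have hswap := integral_integral_swap (f := f) hintf
  have hL : ∀ ω, ∫ t, f ω t ∂ν = max (z - X ω) 0 - max (y - X ω) 0 := by
    intro ω
    have : (fun t => f ω t) = (Ici (X ω)).indicator (fun _ => (1:ℝ)) := by
      ext t
      simp [f, Set.indicator_apply, mem_Ici]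
    rw [this, hν, integral_indicator_const (1:ℝ) measurableSet_Ici,
      measureReal_restrict_apply measurableSet_Ici]
    rw [Set.inter_comm, measureReal_def, vol1 (X ω) y z hyz]
    simp
  have hR : ∀ t, ∫ ω, f ω t ∂μ = (μ {ω | X ω ≤ t}).toReal := by
    intro t
    have : (fun ω => f ω t) = ({ω | X ω ≤ t}).indicator (fun _ => (1:ℝ)) := by
      ext ω
      simp [f, Set.indicator_apply]
    rw [this, integral_indicator_const (1:ℝ) (measurableSet_le hX measurable_const)]
    simp [measureReal_def]
  calc (∫ ω, max (z - X ω) 0 ∂μ) - ∫ ω, max (y - X ω) 0 ∂μ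
      = ∫ ω, (max (z - X ω) 0 - max (y - X ω) 0) ∂μ :=
        (integral_sub (int_pos_part X hXi z) (int_pos_part X hXi y)).symm
    _ = ∫ ω, ∫ t, f ω t ∂ν ∂μ :=
        (integral_congr_ae (Filter.Eventually.of_forall fun ω => (hL ω).symm)).symm.symm
    _ = ∫ t, ∫ ω, f ω t ∂μ ∂ν := hswap
    _ = ∫ t in Ioc y z, (μ {ω | X ω ≤ t}).toReal := by
        rw [hν]
        exact integral_congr_ae (Filter.Eventually.of_forall fun t => hR t)

lemma key2 (X : Ω → ℝ) (hX : Measurable X) (hXi : Integrable X μ) {y z : ℝ} (hyz : y ≤ z) :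
    (∫ ω, max (X ω - y) 0 ∂μ) - ∫ ω, max (X ω - z) 0 ∂μ =
      ∫ t in Ioc y z, (1 - (μ {ω | X ω ≤ t}).toReal) := by
  set ν : Measure ℝ := volume.restrict (Ioc y z) with hν
  have hνfin : IsFiniteMeasure ν := by
    constructor
    rw [hν, Measure.restrict_apply_univ, Real.volume_Ioc]
    exact ENNReal.ofReal_lt_top
  set f : Ω → ℝ → ℝ := fun ω t => ({q : Ω × ℝ | q.2 < X q.1}.indicator 1 (ω, t)) with hf
  have hsetm : MeasurableSet {q : Ω × ℝ | q.2 < X q.1} :=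
    measurableSet_lt measurable_snd (hX.comp measurable_fst)
  have hum : Measurable (Function.uncurry f) := by
    have : Function.uncurry f = {q : Ω × ℝ | q.2 < X q.1}.indicator 1 := rfl
    rw [this]
    exact (measurable_one.indicator hsetm)
  have hintf : Integrable (Function.uncurry f) (μ.prod ν) := by
    refine Integrable.mono' (integrable_const 1) hum.aestronglyMeasurable ?_
    filter_upwards with q
    simp only [Function.uncurry, f, Set.indicator_apply]
    split_ifs <;> norm_num
  have hswap := integral_integral_swap (f := f) hintf
  have hL : ∀ ω, ∫ t, f ω t ∂ν = max (X ω - y) 0 - max (X ω - z) 0 := by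
    intro ω
    have : (fun t => f ω t) = (Iio (X ω)).indicator (fun _ => (1:ℝ)) := by
      ext t
      simp [f, Set.indicator_apply, mem_Iio]
    rw [this, hν, integral_indicator_const (1:ℝ) measurableSet_Iio,
      measureReal_restrict_apply measurableSet_Iio]
    rw [Set.inter_comm, measureReal_def, vol2 (X ω) y z hyz]
    simp
  have hR : ∀ t, ∫ ω, f ω t ∂μ = 1 - (μ {ω | X ω ≤ t}).toReal := by
    intro t
    have h1 : (fun ω => f ω t) = ({ω | t < X ω}).indicator (fun _ => (1:ℝ)) := by
      ext ω
      simp [f, Set.indicator_apply]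
    have h2 : {ω | t < X ω} = {ω | X ω ≤ t}ᶜ := by
      ext ω; simp [not_le]
    rw [h1, integral_indicator_const (1:ℝ) (measurableSet_lt measurable_const hX), h2, measureReal_def,
      measure_compl (measurableSet_le hX measurable_const) (measure_ne_top μ _)]
    rw [measure_univ, ENNReal.toReal_sub_of_le prob_le_one ENNReal.one_ne_top]
    simp
  calc (∫ ω, max (X ω - y) 0 ∂μ) - ∫ ω, max (X ω - z) 0 ∂μ
      = ∫ ω, (max (X ω - y) 0 - max (X ω - z) 0) ∂μ :=
        (integral_sub (int_pos_part' X hXi y) (int_pos_part' X hXi z)).symm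
    _ = ∫ ω, ∫ t, f ω t ∂ν ∂μ :=
        integral_congr_ae (Filter.Eventually.of_forall fun ω => (hL ω).symm)
    _ = ∫ t, ∫ ω, f ω t ∂μ ∂ν := hswap
    _ = ∫ t in Ioc y z, (1 - (μ {ω | X ω ≤ t}).toReal) := by
        rw [hν]
        exact integral_congr_ae (Filter.Eventually.of_forall fun t => hR t)

lemma F_mono (X : Ω → ℝ) : Monotone (fun t => (μ {ω | X ω ≤ t}).toReal) :=
  fun s t hst => ENNReal.toReal_mono (measure_ne_top μ _)
    (measure_mono fun ω hω => le_trans hω hst)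

lemma F_intOn (X : Ω → ℝ) (y z : ℝ) :
    IntegrableOn (fun t => (μ {ω | X ω ≤ t}).toReal) (Ioc y z) volume := by
  haveI : IsFiniteMeasure (volume.restrict (Ioc y z)) := by
    constructor
    rw [Measure.restrict_apply_univ, Real.volume_Ioc]
    exact ENNReal.ofReal_lt_top
  refine Integrable.mono' (integrable_const 1)
    ((F_mono (μ := μ) X).measurable.aestronglyMeasurable) ?_
  filter_upwards with t
  rw [Real.norm_eq_abs, abs_of_nonneg ENNReal.toReal_nonneg]
  exact ENNReal.toReal_mono ENNReal.one_ne_top prob_le_one |>.trans_eq ENNReal.toReal_one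

lemma combo (X : Ω → ℝ) (hX : Measurable X) (hXi : Integrable X μ) (h p : ℝ)
    {y z : ℝ} (hyz : y ≤ z) :
    (h * ∫ ω, max (z - X ω) 0 ∂μ + p * ∫ ω, max (X ω - z) 0 ∂μ) -
      (h * ∫ ω, max (y - X ω) 0 ∂μ + p * ∫ ω, max (X ω - y) 0 ∂μ) =
      ∫ t in Ioc y z, ((h + p) * (μ {ω | X ω ≤ t}).toReal - p) := by
  have h1 := key1 X hX hXi hyz
  have h2 := key2 X hX hXi hyz
  have hFi := F_intOn (μ := μ) X y z
  have h1i : IntegrableOn (fun t => 1 - (μ {ω | X ω ≤ t}).toReal) (Ioc y z) volume := by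
    haveI : IsFiniteMeasure (volume.restrict (Ioc y z)) := by
      constructor
      rw [Measure.restrict_apply_univ, Real.volume_Ioc]
      exact ENNReal.ofReal_lt_top
    exact (integrable_const 1).sub hFi
  have : ∫ t in Ioc y z, ((h + p) * (μ {ω | X ω ≤ t}).toReal - p) =
      h * (∫ t in Ioc y z, (μ {ω | X ω ≤ t}).toReal) -
      p * (∫ t in Ioc y z, (1 - (μ {ω | X ω ≤ t}).toReal)) := by
    rw [← integral_const_mul, ← integral_const_mul, ← integral_sub (hFi.const_mul h) (h1i.const_mul p)]
    congr 1
    ext t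
    ring
  rw [this, ← h1, ← h2]
  ring


end newsvendorHelpers

/-- If `S = {y : Σ_{k=1}^{a} φ_{n,k}(y) ≥ a·p/(h+p)}` is nonempty and bounded below, then
`y_{n,a} = inf S` is a global minimizer of the multi-period cost function `L_{n,a}`. -/
theorem stmt12 {Ω : Type*} [MeasurableSpace Ω] (μ : Measure Ω) [IsProbabilityMeasure μ]
    (T : ℕ) (ξ : ℕ → Ω → ℝ)
    (hmeas : ∀ i, Measurable (ξ i)) (hint : ∀ i, Integrable (ξ i) μ)
    (hpos : ∀ i, ∀ᵐ ω ∂μ, 0 ≤ ξ i ω)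
    (hind : iIndepFun ξ μ)
    (h p : ℝ) (hh : 0 < h) (hp : 0 < p)
    (n a : ℕ) (hn : 1 ≤ n) (ha : 1 ≤ a) (hna : n + a - 1 ≤ T)
    (hne : {y : ℝ | (a : ℝ) * p / (h + p) ≤
      ∑ k ∈ Finset.Icc 1 a, cdf μ ξ n k y}.Nonempty)
    (hbdd : BddBelow {y : ℝ | (a : ℝ) * p / (h + p) ≤
      ∑ k ∈ Finset.Icc 1 a, cdf μ ξ n k y}) :
    ∀ z : ℝ,
      Lmp μ h p ξ n a
        (sInf {y : ℝ | (a : ℝ) * p / (h + p) ≤ ∑ k ∈ Finset.Icc 1 a, cdf μ ξ n k y}) ≤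
      Lmp μ h p ξ n a z := by
  open Set in
  intro z
  set S := {y : ℝ | (a : ℝ) * p / (h + p) ≤ ∑ k ∈ Finset.Icc 1 a, cdf μ ξ n k y} with hS
  set y₀ := sInf S with hy₀
  set Φ : ℝ → ℝ := fun t => ∑ k ∈ Finset.Icc 1 a, cdf μ ξ n k t with hΦ
  have hhp : (0:ℝ) < h + p := by linarith
  have haccm : ∀ k, Measurable (acc ξ n k) := fun k =>
    Finset.measurable_sum _ fun i _ => hmeas (n + i)
  have hacci : ∀ k, Integrable (acc ξ n k) μ := fun k =>
    integrable_finset_sum _ fun i _ => hint (n + i)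
  -- difference formula
  have hdiff : ∀ y w : ℝ, y ≤ w →
      Lmp μ h p ξ n a w - Lmp μ h p ξ n a y =
        ∫ t in Ioc y w, ((h + p) * Φ t - (a : ℝ) * p) := by
    intro y w hyw
    have hsum : Lmp μ h p ξ n a w - Lmp μ h p ξ n a y =
        ∑ k ∈ Finset.Icc 1 a, ∫ t in Ioc y w,
          ((h + p) * (μ {ω | acc ξ n k ω ≤ t}).toReal - p) := by
      rw [Lmp, Lmp, ← Finset.sum_sub_distrib]
      exact Finset.sum_congr rfl fun k _ => combo (acc ξ n k) (haccm k) (hacci k) h p hyw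
    rw [hsum, ← integral_finset_sum]
    · apply setIntegral_congr_fun measurableSet_Ioc
      intro t _
      simp only [hΦ, _root_.cdf, Finset.mul_sum, Finset.sum_sub_distrib]
      rw [Finset.sum_const, Nat.card_Icc]
      push_cast
      ring
    · intro k _
      haveI : IsFiniteMeasure (volume.restrict (Ioc y w)) := by
        constructor
        rw [Measure.restrict_apply_univ, Real.volume_Ioc]
        exact ENNReal.ofReal_lt_top
      exact ((F_intOn (acc ξ n k) y w).const_mul (h + p)).sub (integrable_const p)
  have hΦmono : Monotone Φ := fun s t hst =>
    Finset.sum_le_sum fun k _ => F_mono (μ := μ) (acc ξ n k) hst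
  rcases le_or_gt y₀ z with hz | hz
  · have hd := hdiff y₀ z hz
    have hnn : 0 ≤ ∫ t in Ioc y₀ z, ((h + p) * Φ t - (a : ℝ) * p) := by
      apply setIntegral_nonneg measurableSet_Ioc
      intro t ht
      obtain ⟨s, hsS, hst⟩ := (csInf_lt_iff hbdd hne).1 ht.1
      have h1 : (a : ℝ) * p / (h + p) ≤ Φ s := hsS
      have h2 : Φ s ≤ Φ t := hΦmono hst.le
      rw [div_le_iff₀ hhp] at h1
      nlinarith
    linarith
  · have hd := hdiff z y₀ hz.le
    have hnp : ∫ t in Ioc z y₀, ((h + p) * Φ t - (a : ℝ) * p) ≤ 0 := by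
      rw [← Measure.restrict_congr_set Ioo_ae_eq_Ioc]
      apply setIntegral_nonpos measurableSet_Ioo
      intro t ht
      have htS : t ∉ S := notMem_of_lt_csInf ht.2 hbdd
      have h1 : Φ t < (a : ℝ) * p / (h + p) := lt_of_not_ge htS
      rw [lt_div_iff₀ hhp] at h1
      nlinarith
    linarith
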